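/- Let P = ℂ³ with standard basis e₁, e₂, e₃ and R = ℂ^h with standard basis f₁, …, f_h and the standard symmetric bilinear form Q(x,y) = Σ x_α y_α. Let λ₁, …, λ_h be nonzero and pairwise distinct complex numbers and μ₁, …, μ_h complex numbers, and for each α define v_α ∈ Hom(P,R) by v_α(e₁) = f_α, v_α(e₂) = λ_α f_α, v_α(e₃) = μ_α f_α. Then E = span{v₁, …, v_h} is an h-dimensional abelian subspace of Hom(P,R), and it is a maximal abelian subspace: any w ∈ Hom(P,R) such that span(E ∪ {w}) is abelian already lies in E. -/

import Mathlib

open Module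

/-- A linear subspace `E ⊆ Hom(P,R)` is *abelian* (with respect to a bilinear form `Q` on `R`)
if `Q(A u, B u') = Q(B u, A u')` for all `A, B ∈ E` and all `u, u' ∈ P`. -/
def IsAbelianSubspace {P R : Type*} [AddCommGroup P] [Module ℂ P]
    [AddCommGroup R] [Module ℂ R] (Q : R →ₗ[ℂ] R →ₗ[ℂ] ℂ)
    (E : Submodule ℂ (P →ₗ[ℂ] R)) : Prop :=
  ∀ A ∈ E, ∀ B ∈ E, ∀ u u' : P, Q (A u) (B u') = Q (B u) (A u')

/-- The standard symmetric bilinear form `Q(x,y) = ∑ x α * y α` on `ℂ^h`. -/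
noncomputable def stdQ (h : ℕ) : (Fin h → ℂ) →ₗ[ℂ] (Fin h → ℂ) →ₗ[ℂ] ℂ :=
  LinearMap.mk₂ ℂ (fun x y => ∑ α, x α * y α)
    (fun x x' y => by simp [add_mul, Finset.sum_add_distrib])
    (fun c x y => by simp [Finset.mul_sum, mul_assoc])
    (fun x y y' => by simp [mul_add, Finset.sum_add_distrib])
    (fun c x y => by
      simp only [Pi.smul_apply, smul_eq_mul, Finset.mul_sum]
      exact Finset.sum_congr rfl fun i _ => by ring)

/-- with `P = ℂ³`, `R = ℂ^h`, the standard form `Q`, nonzero pairwise-distinct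
`λ₁, …, λ_h` and arbitrary `μ₁, …, μ_h`, the maps `v_α` with `v_α(e₁) = f_α`,
`v_α(e₂) = λ_α f_α`, `v_α(e₃) = μ_α f_α` span an `h`-dimensional abelian subspace of
`Hom(P,R)` which is maximal abelian. -/
theorem span_v_is_maximal_abelian (h : ℕ) (lam mu : Fin h → ℂ)
    (hlam0 : ∀ α, lam α ≠ 0) (hlam : Function.Injective lam)
    (v : Fin h → ((Fin 3 → ℂ) →ₗ[ℂ] (Fin h → ℂ)))
    (hv1 : ∀ α, v α (Pi.single 0 1) = (Pi.single α 1 : Fin h → ℂ))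
    (hv2 : ∀ α, v α (Pi.single 1 1) = lam α • (Pi.single α 1 : Fin h → ℂ))
    (hv3 : ∀ α, v α (Pi.single 2 1) = mu α • (Pi.single α 1 : Fin h → ℂ))
    (E : Submodule ℂ ((Fin 3 → ℂ) →ₗ[ℂ] (Fin h → ℂ)))
    (hEdef : E = Submodule.span ℂ (Set.range v)) :
    finrank ℂ ↥E = h ∧ IsAbelianSubspace (stdQ h) E ∧
      ∀ w : (Fin 3 → ℂ) →ₗ[ℂ] (Fin h → ℂ),
        IsAbelianSubspace (stdQ h) (Submodule.span ℂ (insert w (E : Set _))) → w ∈ E := by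

  subst hEdef
  have hu : ∀ u : Fin 3 → ℂ,
      u = u 0 • (Pi.single 0 1 : Fin 3 → ℂ) + u 1 • (Pi.single 1 1 : Fin 3 → ℂ)
        + u 2 • (Pi.single 2 1 : Fin 3 → ℂ) := by
    intro u; funext i; fin_cases i <;> simp
  set L : Fin h → (Fin 3 → ℂ) → ℂ := fun α u => u 0 + lam α * u 1 + mu α * u 2 with hL
  have hvform : ∀ α (u : Fin 3 → ℂ),
      v α u = L α u • (Pi.single α 1 : Fin h → ℂ) := by
    intro α u
    conv_lhs => rw [hu u]
    rw [map_add, map_add, map_smul, map_smul, map_smul, hv1, hv2, hv3,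
      smul_smul, smul_smul, ← add_smul, ← add_smul]
    congr 1
    simp only [hL]
    ring
  -- every element of E has the form u ↦ ∑ cₐ L α u • fₐ
  have hcond : ∀ A ∈ Submodule.span ℂ (Set.range v), ∀ (u : Fin 3 → ℂ) (α : Fin h),
      A u α = A (Pi.single 0 1) α * L α u := by
    intro A hA
    induction hA using Submodule.span_induction with
    | mem A hA =>
        obtain ⟨α, rfl⟩ := hA
        intro u β
        rw [hvform, hv1]
        rcases eq_or_ne β α with rfl | hne
        · simp [hL]
        · simp [Pi.single_apply, hne]
    | zero => simp
    | add A B _ _ hA hB =>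
        intro u α
        rw [LinearMap.add_apply, Pi.add_apply, LinearMap.add_apply, Pi.add_apply,
          hA, hB, add_mul]
    | smul c A _ hA =>
        intro u α
        rw [LinearMap.smul_apply, Pi.smul_apply, LinearMap.smul_apply, Pi.smul_apply,
          smul_eq_mul, smul_eq_mul, hA, mul_assoc]
  -- linear independence
  have hli : LinearIndependent ℂ v := by
    have hbase : LinearIndependent ℂ (fun α : Fin h => (Pi.single α 1 : Fin h → ℂ)) := by
      have h0 := (Pi.basisFun ℂ (Fin h)).linearIndependent
      have heq : ⇑(Pi.basisFun ℂ (Fin h)) = fun α => (Pi.single α 1 : Fin h → ℂ) :=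
        funext fun α => Pi.basisFun_apply ℂ (Fin h) α
      rwa [heq] at h0
    apply LinearIndependent.of_comp (LinearMap.applyₗ (Pi.single 0 1 : Fin 3 → ℂ))
    have : (LinearMap.applyₗ (Pi.single 0 1 : Fin 3 → ℂ)) ∘ v
        = fun α : Fin h => (Pi.single α 1 : Fin h → ℂ) := by
      funext α; simp only [Function.comp_apply, LinearMap.applyₗ_apply_apply]; exact hv1 α
    rw [this]; exact hbase
  refine ⟨?_, ?_, ?_⟩
  · simpa using finrank_span_eq_card hli
  · intro A hA B hB u u'
    simp only [stdQ, LinearMap.mk₂_apply]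
    refine Finset.sum_congr rfl fun α _ => ?_
    rw [hcond A hA u α, hcond B hB u' α, hcond B hB u α, hcond A hA u' α]
    ring
  · intro w habs
    have hwF : w ∈ Submodule.span ℂ (insert w ((Submodule.span ℂ (Set.range v) : Submodule ℂ _) : Set _)) :=
      Submodule.subset_span (Set.mem_insert _ _)
    have hvF : ∀ α, v α ∈ Submodule.span ℂ (insert w ((Submodule.span ℂ (Set.range v) : Submodule ℂ _) : Set _)) :=
      fun α => Submodule.subset_span (Set.mem_insert_of_mem _ (Submodule.subset_span (Set.mem_range_self α)))
    have hw : ∀ (u : Fin 3 → ℂ) (α : Fin h), w u α = w (Pi.single 0 1) α * L α u := by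
      intro u α
      have key := habs w hwF (v α) (hvF α) u (Pi.single 0 1)
      simp only [stdQ, LinearMap.mk₂_apply, hv1, hvform] at key
      have lhs : ∑ β, w u β * (Pi.single α 1 : Fin h → ℂ) β = w u α := by
        simp [Pi.single_apply]
      have rhs : ∑ β, (L α u • (Pi.single α 1 : Fin h → ℂ)) β * w (Pi.single 0 1) β
          = w (Pi.single 0 1) α * L α u := by
        simp [Pi.single_apply, mul_comm]
      rw [lhs, rhs] at key
      exact key
    have hweq : w = ∑ α, (w (Pi.single 0 1) α) • v α := by
      apply LinearMap.ext; intro u; funext β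
      rw [hw u β]
      simp only [LinearMap.sum_apply, LinearMap.smul_apply, Finset.sum_apply, Pi.smul_apply,
        hvform, smul_eq_mul, Pi.single_apply]
      rw [Finset.sum_eq_single β]
      · simp
      · intro b _ hb; simp [Ne.symm hb]
      · intro habsent; exact absurd (Finset.mem_univ β) habsent
    rw [hweq]
    exact Submodule.sum_mem _ fun α _ =>
      Submodule.smul_mem _ _ (Submodule.subset_span (Set.mem_range_self α))
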